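/- arXiv:2006.08902 — 7 statements merged into one kernel-verified Lean document; each statement's English description precedes it below -/
import Mathlib

section
/- Let m ≥ 1 and let θ be an even partition of the set [±2m] = {-2m,...,-1,1,...,2m} (every block has even cardinality) with no block of the form {k,-k}. Then every connected component of the associated undirected graph G_θ (with vertex set the blocks of θ and one edge for each k ∈ [2m] joining the block containing k to the block containing -k) contains at least two edges; consequently the number of connected components of G_θ is at most m. -/
open scoped Classical

/-- The index set `[±2m] = {-2m, …, -1, 1, …, 2m}`. -/
noncomputable def pmSet (m : ℕ) : Finset ℤ := (Finset.Icc (-(2 * (m : ℤ))) (2 * (m : ℤ))).erase 0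

/-- Two edge indices `k, l ∈ [2m]` of the graph `G_θ` are adjacent when the edge joining the
blocks of `±k` and the edge joining the blocks of `±l` share an endpoint block. -/
def edgeAdj {m : ℕ} (θ : Finpartition (pmSet m)) (a b : ℤ) : Prop :=
  ∃ B ∈ θ.parts, (a ∈ B ∨ -a ∈ B) ∧ (b ∈ B ∨ -b ∈ B)

/-- Every connected component of `G_θ` contains at least two edges, and consequently
the number of connected components of `G_θ` is at most `m`. -/
theorem stmt0 (m : ℕ) (hm : 1 ≤ m) (θ : Finpartition (pmSet m))
    (heven : ∀ B ∈ θ.parts, Even B.card)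
    (hno : ∀ k : ℤ, ({k, -k} : Finset ℤ) ∉ θ.parts) :
    (∀ k ∈ Finset.Icc (1 : ℤ) (2 * (m : ℤ)), ∃ l ∈ Finset.Icc (1 : ℤ) (2 * (m : ℤ)),
        l ≠ k ∧ Relation.EqvGen (edgeAdj θ) k l) ∧
    ((Finset.Icc (1 : ℤ) (2 * (m : ℤ))).image (fun k =>
        (Finset.Icc (1 : ℤ) (2 * (m : ℤ))).filter
          (fun l => Relation.EqvGen (edgeAdj θ) k l))).card ≤ m := by
  have key : ∀ k ∈ Finset.Icc (1 : ℤ) (2 * (m : ℤ)), ∃ l ∈ Finset.Icc (1 : ℤ) (2 * (m : ℤ)),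
      l ≠ k ∧ Relation.EqvGen (edgeAdj θ) k l := by
    intro k hk
    rw [Finset.mem_Icc] at hk
    have hkmem : k ∈ pmSet m := by
      simp only [pmSet, Finset.mem_erase, Finset.mem_Icc]
      omega
    obtain ⟨B, hB, hkB⟩ := θ.exists_mem hkmem
    have hBsub : B ⊆ pmSet m := θ.le hB
    have hy : ∃ y ∈ B, y ≠ k ∧ y ≠ -k := by
      by_cases hnk : -k ∈ B
      · have hne : ({k, -k} : Finset ℤ) ≠ B := fun h => hno k (h ▸ hB)
        have hsub : ({k, -k} : Finset ℤ) ⊆ B := by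
          intro x hx
          simp only [Finset.mem_insert, Finset.mem_singleton] at hx
          rcases hx with rfl | rfl <;> assumption
        obtain ⟨y, hyB, hy⟩ := Finset.exists_of_ssubset (hsub.ssubset_of_ne hne)
        simp only [Finset.mem_insert, Finset.mem_singleton, not_or] at hy
        exact ⟨y, hyB, hy.1, hy.2⟩
      · have h1 : 1 ≤ B.card := Finset.card_pos.2 ⟨k, hkB⟩
        obtain ⟨c, hc⟩ := heven B hB
        have h2 : 1 < B.card := by omega
        obtain ⟨y, hyB, hyk⟩ := Finset.exists_mem_ne h2 k
        exact ⟨y, hyB, hyk, fun h => hnk (h ▸ hyB)⟩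
    obtain ⟨y, hyB, hyk, hynk⟩ := hy
    have hymem := hBsub hyB
    simp only [pmSet, Finset.mem_erase, Finset.mem_Icc] at hymem
    rcases le_or_gt 0 y with hy0 | hy0
    · refine ⟨y, ?_, hyk, ?_⟩
      · rw [Finset.mem_Icc]; omega
      · exact Relation.EqvGen.rel _ _ ⟨B, hB, Or.inl hkB, Or.inl hyB⟩
    · refine ⟨-y, ?_, ?_, ?_⟩
      · rw [Finset.mem_Icc]; omega
      · intro h; exact hynk (by omega)
      · exact Relation.EqvGen.rel _ _ ⟨B, hB, Or.inl hkB, Or.inr (by rw [neg_neg]; exact hyB)⟩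
  refine ⟨key, ?_⟩
  set S := Finset.Icc (1 : ℤ) (2 * (m : ℤ)) with hSdef
  set f := fun k => S.filter (fun l => Relation.EqvGen (edgeAdj θ) k l) with hfdef
  set T := S.image f with hTdef
  have hdisj : ∀ C1 ∈ T, ∀ C2 ∈ T, C1 ≠ C2 → Disjoint (id C1) (id C2) := by
    intro C1 h1 C2 h2 hne
    obtain ⟨k1, hk1, rfl⟩ := Finset.mem_image.1 h1
    obtain ⟨k2, hk2, rfl⟩ := Finset.mem_image.1 h2
    rw [id, id, Finset.disjoint_left]
    intro l hl1 hl2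
    apply hne
    simp only [hfdef, Finset.mem_filter] at hl1 hl2
    have hkk : Relation.EqvGen (edgeAdj θ) k1 k2 :=
      Relation.EqvGen.trans _ _ _ hl1.2 (Relation.EqvGen.symm _ _ hl2.2)
    ext x
    simp only [hfdef, Finset.mem_filter]
    constructor
    · rintro ⟨hx, h⟩
      exact ⟨hx, Relation.EqvGen.trans _ _ _ (Relation.EqvGen.symm _ _ hkk) h⟩
    · rintro ⟨hx, h⟩
      exact ⟨hx, Relation.EqvGen.trans _ _ _ hkk h⟩
  have h2le : ∀ C ∈ T, 2 ≤ C.card := by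
    intro C hC
    obtain ⟨k, hk, rfl⟩ := Finset.mem_image.1 hC
    obtain ⟨l, hl, hlk, hrel⟩ := key k hk
    have hkmem : k ∈ f k := Finset.mem_filter.2 ⟨hk, Relation.EqvGen.refl k⟩
    have hlmem : l ∈ f k := Finset.mem_filter.2 ⟨hl, hrel⟩
    exact Finset.one_lt_card.2 ⟨k, hkmem, l, hlmem, fun h => hlk h.symm⟩
  have hb : (T.biUnion id).card = ∑ C ∈ T, C.card := by
    rw [Finset.card_biUnion hdisj]
    rfl
  have hsub : T.biUnion id ⊆ S := by
    intro x hx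
    obtain ⟨C, hC, hxC⟩ := Finset.mem_biUnion.1 hx
    obtain ⟨k, hk, rfl⟩ := Finset.mem_image.1 hC
    exact Finset.filter_subset _ _ hxC
  have hsum := Finset.card_nsmul_le_sum T _ 2 h2le
  rw [smul_eq_mul] at hsum
  have hScard : S.card = 2 * m := by
    rw [hSdef, Int.card_Icc]
    omega
  have := Finset.card_le_card hsub
  have heq : T.sum Finset.card = ∑ C ∈ T, C.card := rfl
  omega
end

section
/- Let m ≥ 1 and let θ be an even partition of [±2m] with no block of the form {k,-k}. If the number of connected components of the graph G_θ equals m (the maximal possible value), then every connected component of G_θ has exactly two edges. -/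
open scoped Classical

/-- Every edge index is adjacent to a different edge index. -/
lemma exists_other_adj {m : ℕ} (θ : Finpartition (pmSet m))
    (heven : ∀ B ∈ θ.parts, Even B.card)
    (hno : ∀ k : ℤ, ({k, -k} : Finset ℤ) ∉ θ.parts)
    {k : ℤ} (hk : k ∈ Finset.Icc (1 : ℤ) (2 * (m : ℤ))) :
    ∃ l ∈ Finset.Icc (1 : ℤ) (2 * (m : ℤ)), l ≠ k ∧ edgeAdj θ k l := by
  rw [Finset.mem_Icc] at hk
  have hkpm : k ∈ pmSet m := by
    simp only [pmSet, Finset.mem_erase, Finset.mem_Icc]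
    omega
  obtain ⟨B, hB, hkB⟩ := θ.exists_mem hkpm
  -- B is not contained in {k, -k}
  have hBsub : ¬ (B ⊆ ({k, -k} : Finset ℤ)) := by
    intro hsub
    have hcard2 : ({k, -k} : Finset ℤ).card = 2 := by
      rw [Finset.card_insert_of_notMem, Finset.card_singleton]
      simp only [Finset.mem_singleton]
      omega
    have h2le : 2 ≤ B.card := by
      obtain ⟨r, hr⟩ := heven B hB
      have : 0 < B.card := Finset.card_pos.mpr ⟨k, hkB⟩
      omega
    have : B = ({k, -k} : Finset ℤ) :=
      Finset.eq_of_subset_of_card_le hsub (by omega)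
    exact hno k (this ▸ hB)
  obtain ⟨x, hxB, hxnot⟩ := Finset.not_subset.mp hBsub
  simp only [Finset.mem_insert, Finset.mem_singleton] at hxnot
  push_neg at hxnot
  have hxpm : x ∈ pmSet m := θ.le hB hxB
  simp only [pmSet, Finset.mem_erase, Finset.mem_Icc] at hxpm
  rcases le_or_gt 0 x with hx0 | hx0
  · refine ⟨x, ?_, hxnot.1, ⟨B, hB, Or.inl hkB, Or.inl hxB⟩⟩
    rw [Finset.mem_Icc]; omega
  · refine ⟨-x, ?_, ?_, ⟨B, hB, Or.inl hkB, Or.inr (by simpa using hxB)⟩⟩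
    · rw [Finset.mem_Icc]; omega
    · intro h; exact hxnot.2 (by omega)

/-- If `θ` is an even partition of `[±2m]` with no block `{k, -k}` and the graph `G_θ` has
exactly `m` connected components, then every connected component of `G_θ` has exactly two
edges. -/
theorem stmt1 (m : ℕ) (hm : 1 ≤ m) (θ : Finpartition (pmSet m))
    (heven : ∀ B ∈ θ.parts, Even B.card)
    (hno : ∀ k : ℤ, ({k, -k} : Finset ℤ) ∉ θ.parts)
    (hmax : ((Finset.Icc (1 : ℤ) (2 * (m : ℤ))).image (fun k =>
        (Finset.Icc (1 : ℤ) (2 * (m : ℤ))).filter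
          (fun l => Relation.EqvGen (edgeAdj θ) k l))).card = m) :
    ∀ k ∈ Finset.Icc (1 : ℤ) (2 * (m : ℤ)),
      ((Finset.Icc (1 : ℤ) (2 * (m : ℤ))).filter
        (fun l => Relation.EqvGen (edgeAdj θ) k l)).card = 2 := by
  set S := Finset.Icc (1 : ℤ) (2 * (m : ℤ)) with hSdef
  set C : ℤ → Finset ℤ := fun k => S.filter (fun l => Relation.EqvGen (edgeAdj θ) k l)
    with hCdef
  set T := S.image C with hTdef
  -- each class contains its base point
  have hmemC : ∀ k ∈ S, k ∈ C k := by
    intro k hk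
    simp only [hCdef, Finset.mem_filter]
    exact ⟨hk, Relation.EqvGen.refl k⟩
  -- classes of related points coincide
  have hclass_eq : ∀ k k', Relation.EqvGen (edgeAdj θ) k k' → C k = C k' := by
    intro k k' h
    ext l
    simp only [hCdef, Finset.mem_filter, and_congr_right_iff]
    intro _
    exact ⟨fun hl => (h.symm).trans _ _ _ hl, fun hl => h.trans _ _ _ hl⟩
  -- distinct classes are disjoint
  have hdisj : ∀ c ∈ T, ∀ d ∈ T, c ≠ d → Disjoint c d := by
    intro c hc d hd hne
    obtain ⟨k, _, rfl⟩ := Finset.mem_image.mp hc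
    obtain ⟨k', _, rfl⟩ := Finset.mem_image.mp hd
    rw [Finset.disjoint_left]
    intro l hl hl'
    simp only [hCdef, Finset.mem_filter] at hl hl'
    exact hne (hclass_eq k k' (hl.2.trans _ _ _ (hl'.2.symm _ _)))
  -- union of classes is S
  have hcover : T.biUnion id = S := by
    apply Finset.Subset.antisymm
    · intro l hl
      obtain ⟨c, hc, hlc⟩ := Finset.mem_biUnion.mp hl
      obtain ⟨k, _, rfl⟩ := Finset.mem_image.mp hc
      exact (Finset.mem_filter.mp hlc).1
    · intro k hk
      exact Finset.mem_biUnion.mpr ⟨C k, Finset.mem_image_of_mem C hk, hmemC k hk⟩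
  have hScard : S.card = 2 * m := by
    rw [hSdef, Int.card_Icc]
    omega
  have hsum : ∑ c ∈ T, c.card = 2 * m := by
    have := Finset.card_biUnion hdisj
    rw [← this, show (T.biUnion fun x => x) = S from hcover, hScard]
  -- each class has at least 2 elements
  have hge : ∀ c ∈ T, 2 ≤ c.card := by
    intro c hc
    obtain ⟨k, hk, rfl⟩ := Finset.mem_image.mp hc
    obtain ⟨l, hl, hlk, hadj⟩ := exists_other_adj θ heven hno hk
    have hlC : l ∈ C k := by
      simp only [hCdef, Finset.mem_filter]
      exact ⟨hl, Relation.EqvGen.rel _ _ hadj⟩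
    have : ({k, l} : Finset ℤ) ⊆ C k := by
      intro x hx
      simp only [Finset.mem_insert, Finset.mem_singleton] at hx
      rcases hx with rfl | rfl
      · exact hmemC x hk
      · exact hlC
    calc 2 = ({k, l} : Finset ℤ).card := by
            rw [Finset.card_insert_of_notMem (by simpa using (Ne.symm hlk)),
              Finset.card_singleton]
         _ ≤ (C k).card := Finset.card_le_card this
  -- therefore each class has exactly 2 elements
  have hall : ∀ c ∈ T, c.card = 2 := by
    by_contra hcon
    push_neg at hcon
    obtain ⟨c, hc, hcne⟩ := hcon
    have hlt : (2 : ℕ) < c.card := lt_of_le_of_ne (hge c hc) (Ne.symm hcne)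
    have : ∑ _c ∈ T, 2 < ∑ c ∈ T, c.card :=
      Finset.sum_lt_sum (fun i hi => hge i hi) ⟨c, hc, hlt⟩
    rw [Finset.sum_const, smul_eq_mul, hmax, hsum] at this
    omega
  intro k hk
  exact hall (C k) (Finset.mem_image_of_mem C hk)
end

section
/- Let m₁, m₂ ≥ 1 with m₁ = m₂, m = 2m₁, and let σ be the permutation of [±2m] with cycles (−1,1,...,−2m₁,2m₁)(−2m₁−1,2m₁+1,...,−2m₁−2m₂,2m₁+2m₂). For each l ∈ {2m₁+1,...,2m₁+2m₂}, the collection θ_l = { {σ^t(−1), σ^{−t−1}(−l)} : t ≥ 0 } is a pairing (perfect matching) of [±2m], and the map l ↦ θ_l is injective; hence the set P₁ = {θ_l : 2m₁+1 ≤ l ≤ 2m₁+2m₂} has cardinality 2m₁. -/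
/-- `σ` is the permutation of `ℤ` with cycle decomposition
`(−1,1,−2,2,…,−2m₁,2m₁)(−2m₁−1,2m₁+1,…,−2m₁−2m₂,2m₁+2m₂)`, fixing all other points. -/
def IsCycleSigma (m₁ m₂ : ℕ) (σ : Equiv.Perm ℤ) : Prop :=
  (∀ k : ℤ, 1 ≤ k → k ≤ 2 * (m₁ : ℤ) → σ (-k) = k) ∧
  (∀ k : ℤ, 1 ≤ k → k < 2 * (m₁ : ℤ) → σ k = -(k + 1)) ∧
  σ (2 * (m₁ : ℤ)) = -1 ∧
  (∀ k : ℤ, 2 * (m₁ : ℤ) + 1 ≤ k → k ≤ 2 * (m₁ : ℤ) + 2 * (m₂ : ℤ) → σ (-k) = k) ∧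
  (∀ k : ℤ, 2 * (m₁ : ℤ) + 1 ≤ k → k < 2 * (m₁ : ℤ) + 2 * (m₂ : ℤ) → σ k = -(k + 1)) ∧
  σ (2 * (m₁ : ℤ) + 2 * (m₂ : ℤ)) = -(2 * (m₁ : ℤ) + 1) ∧
  (∀ x : ℤ, (x = 0 ∨ 2 * (m₁ : ℤ) + 2 * (m₂ : ℤ) < |x|) → σ x = x)

namespace Stmt6Aux

/-- position `r` in the first cycle `(-1,1,-2,2,…)` -/
def c1 (r : ℕ) : ℤ := if r % 2 = 0 then -((r / 2 + 1 : ℕ) : ℤ) else ((r / 2 + 1 : ℕ) : ℤ)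

/-- position `r` in the second cycle `(-(2m+1),2m+1,…)` -/
def c2 (m r : ℕ) : ℤ :=
  if r % 2 = 0 then -((2 * m + r / 2 + 1 : ℕ) : ℤ) else ((2 * m + r / 2 + 1 : ℕ) : ℤ)

lemma c1_cases (r : ℕ) : c1 r = ((r / 2 + 1 : ℕ) : ℤ) ∧ r % 2 ≠ 0 ∨
    c1 r = -((r / 2 + 1 : ℕ) : ℤ) ∧ r % 2 = 0 := by
  unfold c1; split
  · exact Or.inr ⟨rfl, by assumption⟩
  · exact Or.inl ⟨rfl, by assumption⟩

lemma c2_cases (m r : ℕ) : c2 m r = ((2 * m + r / 2 + 1 : ℕ) : ℤ) ∧ r % 2 ≠ 0 ∨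
    c2 m r = -((2 * m + r / 2 + 1 : ℕ) : ℤ) ∧ r % 2 = 0 := by
  unfold c2; split
  · exact Or.inr ⟨rfl, by assumption⟩
  · exact Or.inl ⟨rfl, by assumption⟩

lemma c1_inj {r s : ℕ} (h : c1 r = c1 s) : r = s := by
  rcases c1_cases r with ⟨h1, h2⟩ | ⟨h1, h2⟩ <;> rcases c1_cases s with ⟨h3, h4⟩ | ⟨h3, h4⟩ <;>
    rw [h1, h3] at h <;> omega

lemma c2_inj {m r s : ℕ} (h : c2 m r = c2 m s) : r = s := by
  rcases c2_cases m r with ⟨h1, h2⟩ | ⟨h1, h2⟩ <;> rcases c2_cases m s with ⟨h3, h4⟩ | ⟨h3, h4⟩ <;>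
    rw [h1, h3] at h <;> omega

lemma c1_ne_c2 {m r s : ℕ} (hr : r < 4 * m) : c1 r ≠ c2 m s := by
  rcases c1_cases r with ⟨h1, h2⟩ | ⟨h1, h2⟩ <;> rcases c2_cases m s with ⟨h3, h4⟩ | ⟨h3, h4⟩ <;>
    rw [h1, h3] <;> omega

section

variable {m₁ : ℕ} {σ : Equiv.Perm ℤ}

lemma step1 (hσ : IsCycleSigma m₁ m₁ σ) {r : ℕ} (hr : r < 4 * m₁) :
    σ (c1 r) = c1 ((r + 1) % (4 * m₁)) := by
  obtain ⟨h1, h2, h3, -, -, -, -⟩ := hσ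
  by_cases hp : r % 2 = 0
  · have hlt : r + 1 < 4 * m₁ := by omega
    rw [Nat.mod_eq_of_lt hlt]
    have e1 : c1 r = -((r / 2 + 1 : ℕ) : ℤ) := by unfold c1; rw [if_pos hp]
    have e2 : c1 (r + 1) = (((r + 1) / 2 + 1 : ℕ) : ℤ) := by
      unfold c1; rw [if_neg (by omega)]
    rw [e1, e2, h1 _ (by push_cast; omega) (by push_cast; omega)]
    push_cast; omega
  · by_cases hl : r + 1 < 4 * m₁
    · rw [Nat.mod_eq_of_lt hl]
      have e1 : c1 r = ((r / 2 + 1 : ℕ) : ℤ) := by unfold c1; rw [if_neg hp]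
      have e2 : c1 (r + 1) = -(((r + 1) / 2 + 1 : ℕ) : ℤ) := by
        unfold c1; rw [if_pos (by omega)]
      rw [e1, e2, h2 _ (by push_cast; omega) (by push_cast; omega)]
      push_cast; omega
    · have hr4 : r + 1 = 4 * m₁ := by omega
      rw [hr4, Nat.mod_self]
      have e1 : c1 r = 2 * (m₁ : ℤ) := by
        unfold c1; rw [if_neg hp]; push_cast; omega
      have e2 : c1 0 = -1 := by unfold c1; norm_num
      rw [e1, h3]; exact e2.symm

lemma step2 (hσ : IsCycleSigma m₁ m₁ σ) {r : ℕ} (hr : r < 4 * m₁) :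
    σ (c2 m₁ r) = c2 m₁ ((r + 1) % (4 * m₁)) := by
  obtain ⟨-, -, -, h4, h5, h6, -⟩ := hσ
  by_cases hp : r % 2 = 0
  · have hlt : r + 1 < 4 * m₁ := by omega
    rw [Nat.mod_eq_of_lt hlt]
    have e1 : c2 m₁ r = -((2 * m₁ + r / 2 + 1 : ℕ) : ℤ) := by unfold c2; rw [if_pos hp]
    have e2 : c2 m₁ (r + 1) = ((2 * m₁ + (r + 1) / 2 + 1 : ℕ) : ℤ) := by
      unfold c2; rw [if_neg (by omega)]
    rw [e1, e2, h4 _ (by push_cast; omega) (by push_cast; omega)]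
    push_cast; omega
  · by_cases hl : r + 1 < 4 * m₁
    · rw [Nat.mod_eq_of_lt hl]
      have e1 : c2 m₁ r = ((2 * m₁ + r / 2 + 1 : ℕ) : ℤ) := by unfold c2; rw [if_neg hp]
      have e2 : c2 m₁ (r + 1) = -((2 * m₁ + (r + 1) / 2 + 1 : ℕ) : ℤ) := by
        unfold c2; rw [if_pos (by omega)]
      rw [e1, e2, h5 _ (by push_cast; omega) (by push_cast; omega)]
      push_cast; omega
    · have hr4 : r + 1 = 4 * m₁ := by omega
      rw [hr4, Nat.mod_self]
      have e1 : c2 m₁ r = 2 * (m₁ : ℤ) + 2 * (m₁ : ℤ) := by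
        unfold c2; rw [if_neg hp]; push_cast; omega
      have e2 : c2 m₁ 0 = -(2 * (m₁ : ℤ) + 1) := by
        unfold c2; rw [if_pos (by norm_num)]; push_cast; ring
      rw [e1, h6]; exact e2.symm

lemma pow1 (hm : 0 < m₁) (hσ : IsCycleSigma m₁ m₁ σ) (t r : ℕ) :
    (σ ^ t) (c1 (r % (4 * m₁))) = c1 ((r + t) % (4 * m₁)) := by
  induction t with
  | zero => simp
  | succ t ih =>
    rw [pow_succ', Equiv.Perm.mul_apply, ih,
      step1 hσ (Nat.mod_lt _ (by omega)),
      ((Nat.mod_modEq (r + t) (4 * m₁)).add_right 1 : _)]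
    ring_nf

lemma pow2 (hm : 0 < m₁) (hσ : IsCycleSigma m₁ m₁ σ) (t r : ℕ) :
    (σ ^ t) (c2 m₁ (r % (4 * m₁))) = c2 m₁ ((r + t) % (4 * m₁)) := by
  induction t with
  | zero => simp
  | succ t ih =>
    rw [pow_succ', Equiv.Perm.mul_apply, ih,
      step2 hσ (Nat.mod_lt _ (by omega)),
      ((Nat.mod_modEq (r + t) (4 * m₁)).add_right 1 : _)]
    ring_nf

lemma inv2 (hm : 0 < m₁) (hσ : IsCycleSigma m₁ m₁ σ) (t r : ℕ) :
    (σ ^ t)⁻¹ (c2 m₁ (r % (4 * m₁))) = c2 m₁ ((r + (4 * m₁ - 1) * t) % (4 * m₁)) := by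
  have h := pow2 hm hσ t (r + (4 * m₁ - 1) * t)
  have e : (r + (4 * m₁ - 1) * t + t) % (4 * m₁) = r % (4 * m₁) := by
    have e2 : r + (4 * m₁ - 1) * t + t = r + (4 * m₁) * t := by
      have : (4 * m₁ - 1) * t + t = (4 * m₁ - 1 + 1) * t := by ring
      rw [add_assoc, this, show 4 * m₁ - 1 + 1 = 4 * m₁ by omega]
    rw [e2, Nat.add_mul_mod_self_left]
  rw [e] at h
  rw [← h]; exact (σ ^ t).symm_apply_apply _

end

lemma cancel_idx {m : ℕ} (hm : 0 < m) {a t t' : ℕ}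
    (h : (a + (4 * m - 1) * (t + 1)) % (4 * m) = (a + (4 * m - 1) * (t' + 1)) % (4 * m)) :
    t % (4 * m) = t' % (4 * m) := by
  have h' : Nat.ModEq (4 * m) (a + (4 * m - 1) * (t + 1)) (a + (4 * m - 1) * (t' + 1)) := h
  have h2 := h'.add_left_cancel' a
  have hco : Nat.gcd (4 * m) (4 * m - 1) = 1 := by
    rw [show 4 * m = (4 * m - 1) + 1 by omega]
    simp [Nat.succ_sub_one, Nat.gcd_comm, Nat.gcd_self_add_left]
  have h3 := Nat.ModEq.cancel_left_of_coprime hco h2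
  exact h3.add_right_cancel' 1

lemma exists_idx {m : ℕ} (hm : 0 < m) (a s : ℕ) (hs : s < 4 * m) :
    (a + (4 * m - 1) * ((a + (4 * m - 1 - s)) + 1)) % (4 * m) = s := by
  have hu : 4 * m - 1 = s + (4 * m - 1 - s) := by omega
  set u := 4 * m - 1 - s with hudef
  have hN : 4 * m = s + u + 1 := by omega
  have e : a + (4 * m - 1) * ((a + u) + 1) = (4 * m) * (a + u) + s := by
    rw [hu, hN]; ring
  rw [e, Nat.mul_add_mod, Nat.mod_eq_of_lt hs]

lemma c1_surj {m : ℕ} {x : ℤ} (h0 : x ≠ 0) (h1 : -(2 * (m : ℤ)) ≤ x) (h2 : x ≤ 2 * (m : ℤ)) :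
    ∃ r, r < 4 * m ∧ c1 r = x := by
  by_cases hx : 0 < x
  · refine ⟨(2 * x - 1).toNat, by omega, ?_⟩
    unfold c1
    rw [if_neg (by omega)]
    omega
  · refine ⟨(-2 * x - 2).toNat, by omega, ?_⟩
    unfold c1
    rw [if_pos (by omega)]
    omega

lemma c2_surj {m : ℕ} {x : ℤ} (h1 : -(2 * (m : ℤ)) - 2 * (m : ℤ) ≤ x)
    (h2 : x ≤ 2 * (m : ℤ) + 2 * (m : ℤ)) (h3 : x < -(2 * (m : ℤ)) ∨ 2 * (m : ℤ) < x) :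
    ∃ r, r < 4 * m ∧ c2 m r = x := by
  rcases h3 with h3 | h3
  · refine ⟨(-2 * x - 4 * m - 2).toNat, by omega, ?_⟩
    unfold c2
    rw [if_pos (by omega)]
    omega
  · refine ⟨(2 * x - 4 * m - 1).toNat, by omega, ?_⟩
    unfold c2
    rw [if_neg (by omega)]
    omega

/-- the `t`-th block of the pairing `θ_l`, where `a` encodes `l`. -/
def blk (m a t : ℕ) : Finset ℤ :=
  {c1 (t % (4 * m)), c2 m ((a + (4 * m - 1) * (t + 1)) % (4 * m))}

lemma mem_blk {m a t : ℕ} {x : ℤ} :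
    x ∈ blk m a t ↔ x = c1 (t % (4 * m)) ∨
      x = c2 m ((a + (4 * m - 1) * (t + 1)) % (4 * m)) := by
  simp [blk]

lemma blk_congr (m a : ℕ) {t t' : ℕ} (h : t % (4 * m) = t' % (4 * m)) :
    blk m a t = blk m a t' := by
  unfold blk
  have h2 : (a + (4 * m - 1) * (t + 1)) % (4 * m) = (a + (4 * m - 1) * (t' + 1)) % (4 * m) :=
    ((Nat.ModEq.refl a).add (((Nat.ModEq.refl (4 * m - 1)).mul
      (Nat.ModEq.add_right 1 (show Nat.ModEq (4 * m) t t' from h)))) : Nat.ModEq _ _ _)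
  rw [h, h2]

lemma blk_eq {m : ℕ} (hm : 0 < m) {a a' t t' : ℕ} (h : blk m a t = blk m a' t') :
    t % (4 * m) = t' % (4 * m) ∧
      (a + (4 * m - 1) * (t + 1)) % (4 * m) = (a' + (4 * m - 1) * (t' + 1)) % (4 * m) := by
  constructor
  · have hx : c1 (t % (4 * m)) ∈ blk m a' t' := by
      rw [← h]; exact mem_blk.mpr (Or.inl rfl)
    rcases mem_blk.mp hx with h1 | h1
    · exact c1_inj h1
    · exact absurd h1 (c1_ne_c2 (Nat.mod_lt _ (by omega)))
  · have hx : c2 m ((a + (4 * m - 1) * (t + 1)) % (4 * m)) ∈ blk m a' t' := by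
      rw [← h]; exact mem_blk.mpr (Or.inr rfl)
    rcases mem_blk.mp hx with h1 | h1
    · exact absurd h1.symm (c1_ne_c2 (Nat.mod_lt _ (by omega)))
    · exact c2_inj h1

lemma c1_mem_pm {m r : ℕ} (hr : r < 4 * m) : c1 r ∈ pmSet (m + m) := by
  simp only [pmSet, Finset.mem_erase, Finset.mem_Icc]
  rcases c1_cases r with ⟨e, hp⟩ | ⟨e, hp⟩ <;> rw [e] <;> push_cast <;> omega

lemma c2_mem_pm {m r : ℕ} (hr : r < 4 * m) : c2 m r ∈ pmSet (m + m) := by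
  simp only [pmSet, Finset.mem_erase, Finset.mem_Icc]
  rcases c2_cases m r with ⟨e, hp⟩ | ⟨e, hp⟩ <;> rw [e] <;> push_cast <;> omega

end Stmt6Aux

/-- For `m₁ = m₂` and `l` in the second cycle, the family
`θ_l = { {σ^t(−1), σ^{−t−1}(−l)} : t ≥ 0 }` is a pairing of `[±2m]`, the map `l ↦ θ_l` is
injective, and the set `P₁ = {θ_l}` has cardinality `2m₁`. -/
theorem stmt6 (m₁ m₂ : ℕ) (hm₁ : 1 ≤ m₁) (hm₂ : 1 ≤ m₂) (hEq : m₁ = m₂)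
    (σ : Equiv.Perm ℤ) (hσ : IsCycleSigma m₁ m₂ σ)
    (θfun : ℤ → Set (Finset ℤ))
    (hθ : ∀ l : ℤ, θfun l =
      {B | ∃ t : ℕ, B = ({(σ ^ (t : ℤ)) (-1), (σ ^ (-(t : ℤ) - 1)) (-l)} : Finset ℤ)}) :
    (∀ l : ℤ, 2 * (m₁ : ℤ) + 1 ≤ l → l ≤ 2 * (m₁ : ℤ) + 2 * (m₂ : ℤ) →
      (∀ B ∈ θfun l, B.card = 2 ∧ (B : Set ℤ) ⊆ (pmSet (m₁ + m₂) : Set ℤ)) ∧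
      (∀ x ∈ pmSet (m₁ + m₂), ∃! B, B ∈ θfun l ∧ x ∈ B)) ∧
    Set.InjOn θfun (Set.Icc (2 * (m₁ : ℤ) + 1) (2 * (m₁ : ℤ) + 2 * (m₂ : ℤ))) ∧
    (θfun '' Set.Icc (2 * (m₁ : ℤ) + 1) (2 * (m₁ : ℤ) + 2 * (m₂ : ℤ))).ncard = 2 * m₁ := by
  subst hEq
  have hm : 0 < m₁ := hm₁
  have hN : 0 < 4 * m₁ := by omega
  -- characterization of the blocks of `θfun l`
  have key : ∀ l : ℤ, 2 * (m₁ : ℤ) + 1 ≤ l → l ≤ 2 * (m₁ : ℤ) + 2 * (m₁ : ℤ) →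
      ∀ B : Finset ℤ, B ∈ θfun l ↔
        ∃ t : ℕ, B = Stmt6Aux.blk m₁ (2 * (l - 2 * (m₁ : ℤ) - 1).toNat) t := by
    intro l h1 h2 B
    rw [hθ l, Set.mem_setOf_eq]
    apply exists_congr
    intro t
    have e1 : (σ ^ (t : ℤ)) (-1) = Stmt6Aux.c1 (t % (4 * m₁)) := by
      rw [zpow_natCast, show (-1 : ℤ) = Stmt6Aux.c1 (0 % (4 * m₁)) by norm_num [Stmt6Aux.c1],
        Stmt6Aux.pow1 hm hσ t 0, Nat.zero_add]
    have hrlt : 2 * (l - 2 * (m₁ : ℤ) - 1).toNat < 4 * m₁ := by omega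
    have hrc : Stmt6Aux.c2 m₁ (2 * (l - 2 * (m₁ : ℤ) - 1).toNat % (4 * m₁)) = -l := by
      rw [Nat.mod_eq_of_lt hrlt]
      unfold Stmt6Aux.c2
      rw [if_pos (by omega)]
      omega
    have e2 : (σ ^ (-(t : ℤ) - 1)) (-l) = Stmt6Aux.c2 m₁
        ((2 * (l - 2 * (m₁ : ℤ) - 1).toNat + (4 * m₁ - 1) * (t + 1)) % (4 * m₁)) := by
      rw [show (-(t : ℤ) - 1) = -(((t + 1 : ℕ) : ℤ)) by push_cast; ring, zpow_neg, zpow_natCast,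
        ← hrc, Stmt6Aux.inv2 hm hσ (t + 1) _]
    rw [e1, e2]
    exact Iff.rfl
  -- part 2 : injectivity
  have hinj : Set.InjOn θfun (Set.Icc (2 * (m₁ : ℤ) + 1) (2 * (m₁ : ℤ) + 2 * (m₁ : ℤ))) := by
    intro l hl l' hl' hll
    obtain ⟨hl1, hl2⟩ := Set.mem_Icc.mp hl
    obtain ⟨hl1', hl2'⟩ := Set.mem_Icc.mp hl'
    have hB : Stmt6Aux.blk m₁ (2 * (l - 2 * (m₁ : ℤ) - 1).toNat) 0 ∈ θfun l' := by
      rw [← hll]; exact (key l hl1 hl2 _).mpr ⟨0, rfl⟩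
    obtain ⟨t, ht⟩ := (key l' hl1' hl2' _).mp hB
    obtain ⟨hI1, hI2⟩ := Stmt6Aux.blk_eq hm ht
    have h7 : Nat.ModEq (4 * m₁) ((4 * m₁ - 1) * (t + 1)) ((4 * m₁ - 1) * (0 + 1)) :=
      (Nat.ModEq.refl _).mul
        (Nat.ModEq.add_right 1 (show Nat.ModEq (4 * m₁) t 0 from
          (show Nat.ModEq (4 * m₁) 0 t from hI1).symm))
    have h10 : Nat.ModEq (4 * m₁)
        (2 * (l - 2 * (m₁ : ℤ) - 1).toNat + (4 * m₁ - 1) * (t + 1))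
        (2 * (l' - 2 * (m₁ : ℤ) - 1).toNat + (4 * m₁ - 1) * (t + 1)) :=
      ((Nat.ModEq.refl _).add h7).trans (show Nat.ModEq _ _ _ from hI2)
    have h11 := Nat.ModEq.add_right_cancel' _ h10
    have h12 : 2 * (l - 2 * (m₁ : ℤ) - 1).toNat % (4 * m₁)
        = 2 * (l' - 2 * (m₁ : ℤ) - 1).toNat % (4 * m₁) := h11
    rw [Nat.mod_eq_of_lt (by omega), Nat.mod_eq_of_lt (by omega)] at h12
    omega
  refine ⟨?_, hinj, ?_⟩
  · -- part 1 : θfun l is a pairing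
    intro l h1 h2
    constructor
    · intro B hB
      obtain ⟨t, rfl⟩ := (key l h1 h2 B).mp hB
      constructor
      · rw [Stmt6Aux.blk, Finset.card_insert_of_notMem (by
          simp only [Finset.mem_singleton]
          exact Stmt6Aux.c1_ne_c2 (Nat.mod_lt _ hN)), Finset.card_singleton]
      · intro x hx
        rw [Finset.mem_coe] at hx
        rw [Finset.mem_coe]
        rcases Stmt6Aux.mem_blk.mp hx with rfl | rfl
        · exact Stmt6Aux.c1_mem_pm (Nat.mod_lt _ hN)
        · exact Stmt6Aux.c2_mem_pm (Nat.mod_lt _ hN)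
    · intro x hx
      simp only [pmSet, Finset.mem_erase, Finset.mem_Icc] at hx
      push_cast at hx
      by_cases hxs : -(2 * (m₁ : ℤ)) ≤ x ∧ x ≤ 2 * (m₁ : ℤ)
      · obtain ⟨r, hrN, hr⟩ := Stmt6Aux.c1_surj hx.1 hxs.1 hxs.2
        refine ⟨Stmt6Aux.blk m₁ (2 * (l - 2 * (m₁ : ℤ) - 1).toNat) r,
          ⟨(key l h1 h2 _).mpr ⟨r, rfl⟩, ?_⟩, ?_⟩
        · exact Stmt6Aux.mem_blk.mpr (Or.inl (by rw [Nat.mod_eq_of_lt hrN]; exact hr.symm))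
        · rintro B ⟨hB, hxB⟩
          obtain ⟨t, rfl⟩ := (key l h1 h2 B).mp hB
          rcases Stmt6Aux.mem_blk.mp hxB with h | h
          · have he : t % (4 * m₁) = r := Stmt6Aux.c1_inj (h.symm.trans hr.symm)
            exact Stmt6Aux.blk_congr _ _ (by rw [he, Nat.mod_eq_of_lt hrN])
          · exfalso
            rcases Stmt6Aux.c2_cases m₁
              ((2 * (l - 2 * (m₁ : ℤ) - 1).toNat + (4 * m₁ - 1) * (t + 1)) % (4 * m₁)) with
              ⟨e, -⟩ | ⟨e, -⟩ <;> rw [e] at h <;> omega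
      · have hx3 : x < -(2 * (m₁ : ℤ)) ∨ 2 * (m₁ : ℤ) < x := by omega
        obtain ⟨s, hsN, hs⟩ := Stmt6Aux.c2_surj (by omega) (by omega) hx3
        refine ⟨Stmt6Aux.blk m₁ (2 * (l - 2 * (m₁ : ℤ) - 1).toNat)
            (2 * (l - 2 * (m₁ : ℤ) - 1).toNat + (4 * m₁ - 1 - s)),
          ⟨(key l h1 h2 _).mpr ⟨_, rfl⟩, ?_⟩, ?_⟩
        · refine Stmt6Aux.mem_blk.mpr (Or.inr ?_)
          rw [Stmt6Aux.exists_idx hm _ s hsN]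
          exact hs.symm
        · rintro B ⟨hB, hxB⟩
          obtain ⟨t, rfl⟩ := (key l h1 h2 B).mp hB
          rcases Stmt6Aux.mem_blk.mp hxB with h | h
          · exfalso
            have hlt := Nat.mod_lt t hN
            rcases Stmt6Aux.c1_cases (t % (4 * m₁)) with ⟨e, -⟩ | ⟨e, -⟩ <;> rw [e] at h <;>
              omega
          · have h5 : (2 * (l - 2 * (m₁ : ℤ) - 1).toNat + (4 * m₁ - 1) * (t + 1)) % (4 * m₁)
                = s := Stmt6Aux.c2_inj (h.symm.trans hs.symm)
            have h6 := Stmt6Aux.exists_idx hm (2 * (l - 2 * (m₁ : ℤ) - 1).toNat) s hsN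
            exact Stmt6Aux.blk_congr _ _ (Stmt6Aux.cancel_idx hm (h5.trans h6.symm))
  · rw [Set.ncard_image_of_injOn hinj, ← Finset.coe_Icc, Set.ncard_coe_finset, Int.card_Icc]
    omega
end

section
/- Let m₁, m₂ ≥ 1, m = m₁ + m₂, and let σ be the permutation of [±2m] with cycles (−1,1,...,−2m₁,2m₁)(−2m₁−1,2m₁+1,...,−2m₁−2m₂,2m₁+2m₂). For each l₁ ∈ [2m₁], the pairing θ(l₁) = { {σ^t(−l₁), σ^{−t−1}(−l₁)} : t ≥ 0 } of [±2m₁] satisfies θ(l₁) = θ(l₁ + m₁) (indices mod 2m₁), and the pairings θ(1), ..., θ(m₁) are pairwise distinct; hence there are exactly m₁ distinct such pairings. -/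
namespace Stmt7Aux

/-- Parametrization of the first cycle: `ff 2j = -(j+1)`, `ff (2j+1) = j+1`, period `4m₁`. -/
def ff (m₁ : ℕ) (i : ℤ) : ℤ :=
  if i % (4 * (m₁ : ℤ)) % 2 = 0 then -(i % (4 * (m₁ : ℤ)) / 2 + 1)
  else i % (4 * (m₁ : ℤ)) / 2 + 1

variable {m₁ : ℕ}

lemma ff_congr {i j : ℤ} (h : i % (4 * (m₁ : ℤ)) = j % (4 * (m₁ : ℤ))) :
    ff m₁ i = ff m₁ j := by
  unfold ff; rw [h]

lemma ff_eq_of_dvd (hm : 1 ≤ m₁) {i j : ℤ} (h : (4 * (m₁ : ℤ)) ∣ (i - j)) :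
    ff m₁ i = ff m₁ j :=
  ff_congr (Int.emod_eq_emod_iff_emod_sub_eq_zero.mpr (Int.emod_eq_zero_of_dvd h))

lemma ff_inj (hm : 1 ≤ m₁) {i j : ℤ} (h : ff m₁ i = ff m₁ j) :
    (4 * (m₁ : ℤ)) ∣ (i - j) := by
  have hm' : (1 : ℤ) ≤ (m₁ : ℤ) := by exact_mod_cast hm
  have hn0 : (0 : ℤ) < 4 * (m₁ : ℤ) := by omega
  have ha1 := Int.emod_nonneg i (ne_of_gt hn0)
  have ha2 := Int.emod_lt_of_pos i hn0
  have hb1 := Int.emod_nonneg j (ne_of_gt hn0)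
  have hb2 := Int.emod_lt_of_pos j hn0
  have key : i % (4 * (m₁ : ℤ)) = j % (4 * (m₁ : ℤ)) := by
    unfold ff at h
    split_ifs at h with h1 h2 h2 <;> omega
  exact Int.dvd_of_emod_eq_zero (Int.emod_eq_emod_iff_emod_sub_eq_zero.mp key)

lemma ff_mem (hm : 1 ≤ m₁) (i : ℤ) : ff m₁ i ∈ pmSet m₁ := by
  have hm' : (1 : ℤ) ≤ (m₁ : ℤ) := by exact_mod_cast hm
  have hn0 : (0 : ℤ) < 4 * (m₁ : ℤ) := by omega
  have ha1 := Int.emod_nonneg i (ne_of_gt hn0)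
  have ha2 := Int.emod_lt_of_pos i hn0
  simp only [pmSet, Finset.mem_erase, Finset.mem_Icc]
  unfold ff
  split_ifs with h <;> omega

lemma ff_surj (hm : 1 ≤ m₁) {x : ℤ} (hx : x ∈ pmSet m₁) : ∃ a : ℤ, ff m₁ a = x := by
  have hm' : (1 : ℤ) ≤ (m₁ : ℤ) := by exact_mod_cast hm
  simp only [pmSet, Finset.mem_erase, Finset.mem_Icc] at hx
  obtain ⟨hx0, hx1, hx2⟩ := hx
  rcases lt_or_gt_of_ne hx0 with hneg | hpos
  · refine ⟨2 * (-x - 1), ?_⟩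
    unfold ff
    rw [show (2 * (-x - 1)) % (4 * (m₁ : ℤ)) = 2 * (-x - 1) from
      Int.emod_eq_of_lt (by omega) (by omega)]
    split_ifs with h <;> omega
  · refine ⟨2 * x - 1, ?_⟩
    unfold ff
    rw [show (2 * x - 1) % (4 * (m₁ : ℤ)) = 2 * x - 1 from
      Int.emod_eq_of_lt (by omega) (by omega)]
    split_ifs with h <;> omega

lemma pair_congr (hm : 1 ≤ m₁) {a b a' b' : ℤ}
    (h1 : (4 * (m₁ : ℤ)) ∣ (a - a')) (h2 : (4 * (m₁ : ℤ)) ∣ (b - b')) :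
    ({ff m₁ a, ff m₁ b} : Finset ℤ) = {ff m₁ a', ff m₁ b'} := by
  rw [ff_eq_of_dvd hm h1, ff_eq_of_dvd hm h2]


variable {m₂ : ℕ} {σ : Equiv.Perm ℤ}

lemma sigma_step (hm : 1 ≤ m₁) (hσ : IsCycleSigma m₁ m₂ σ) (i : ℤ) :
    σ (ff m₁ i) = ff m₁ (i + 1) := by
  obtain ⟨h1, h2, h3, -, -, -, -⟩ := hσ
  have hm' : (1 : ℤ) ≤ (m₁ : ℤ) := by exact_mod_cast hm
  have hn0 : (0 : ℤ) < 4 * (m₁ : ℤ) := by omega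
  have ha1 := Int.emod_nonneg i (ne_of_gt hn0)
  have ha2 := Int.emod_lt_of_pos i hn0
  have key : (i + 1) % (4 * (m₁ : ℤ)) =
      if i % (4 * (m₁ : ℤ)) + 1 < 4 * (m₁ : ℤ) then i % (4 * (m₁ : ℤ)) + 1 else 0 := by
    rw [Int.add_emod]
    rw [show (1 : ℤ) % (4 * (m₁ : ℤ)) = 1 from Int.emod_eq_of_lt (by omega) (by omega)]
    split_ifs with hlt
    · exact Int.emod_eq_of_lt (by omega) (by omega)
    · rw [show i % (4 * (m₁ : ℤ)) + 1 = 4 * (m₁ : ℤ) by omega, Int.emod_self]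
  rcases Int.even_or_odd' (i % (4 * (m₁ : ℤ))) with ⟨c, hc | hc⟩
  · -- even position
    have hlt : i % (4 * (m₁ : ℤ)) + 1 < 4 * (m₁ : ℤ) := by omega
    have hffi : ff m₁ i = -(c + 1) := by
      unfold ff; rw [hc]; split_ifs with h <;> omega
    have hffi1 : ff m₁ (i + 1) = c + 1 := by
      unfold ff; rw [key, if_pos hlt, hc]; split_ifs with h <;> omega
    rw [hffi, hffi1]
    exact h1 (c + 1) (by omega) (by omega)
  · -- odd position
    have hffi : ff m₁ i = c + 1 := by
      unfold ff; rw [hc]; split_ifs with h <;> omega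
    by_cases hlt : i % (4 * (m₁ : ℤ)) + 1 < 4 * (m₁ : ℤ)
    · have hffi1 : ff m₁ (i + 1) = -(c + 2) := by
        unfold ff; rw [key, if_pos hlt, hc]; split_ifs with h <;> omega
      rw [hffi, hffi1, h2 (c + 1) (by omega) (by omega)]
      ring_nf
    · have hffi1 : ff m₁ (i + 1) = -1 := by
        unfold ff; rw [key, if_neg hlt]; norm_num
      rw [hffi, hffi1, show c + 1 = 2 * (m₁ : ℤ) by omega]
      exact h3

lemma sigma_zpow (hm : 1 ≤ m₁) (hσ : IsCycleSigma m₁ m₂ σ) (t i : ℤ) :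
    (σ ^ t) (ff m₁ i) = ff m₁ (i + t) := by
  have hinv : ∀ j : ℤ, σ⁻¹ (ff m₁ j) = ff m₁ (j - 1) := by
    intro j
    apply σ.injective
    rw [show ∀ x, σ (σ⁻¹ x) = x from fun x => σ.apply_symm_apply x, sigma_step hm hσ]
    congr 1; ring
  induction t using Int.induction_on generalizing i with
  | zero => simp
  | succ k ih =>
      rw [show ((k : ℤ) + 1) = (k : ℤ) + 1 from rfl, zpow_add_one, Equiv.Perm.mul_apply,
        sigma_step hm hσ, ih]
      congr 1; ring
  | pred k ih =>
      rw [show (-(k : ℤ) - 1) = -(k : ℤ) - 1 from rfl, zpow_sub_one, Equiv.Perm.mul_apply,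
        hinv, ih]
      congr 1; ring


def Theta (m₁ : ℕ) (p : ℤ) : Set (Finset ℤ) :=
  {B | ∃ s : ℤ, B = ({ff m₁ (p + s), ff m₁ (p - 1 - s)} : Finset ℤ)}

lemma theta_card_subset (hm : 1 ≤ m₁) {p : ℤ} {B : Finset ℤ} (hB : B ∈ Theta m₁ p) :
    B.card = 2 ∧ (B : Set ℤ) ⊆ (pmSet m₁ : Set ℤ) := by
  obtain ⟨s, rfl⟩ := hB
  have hne : ff m₁ (p + s) ≠ ff m₁ (p - 1 - s) := by
    intro h
    obtain ⟨k, hk⟩ := ff_inj hm h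
    have h2 : (2 : ℤ) ∣ (2 * s + 1) := ⟨2 * (m₁ : ℤ) * k, by linear_combination hk⟩
    omega
  constructor
  · rw [Finset.card_insert_of_notMem (by simpa using hne), Finset.card_singleton]
  · intro x hx
    simp only [Finset.coe_insert, Finset.coe_singleton, Set.mem_insert_iff,
      Set.mem_singleton_iff] at hx
    rcases hx with rfl | rfl <;> exact ff_mem hm _

lemma theta_pairing (hm : 1 ≤ m₁) (p : ℤ) :
    ∀ x ∈ pmSet m₁, ∃! B, B ∈ Theta m₁ p ∧ x ∈ B := by
  intro x hx
  obtain ⟨a, rfl⟩ := ff_surj hm hx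
  refine ⟨({ff m₁ (p + (a - p)), ff m₁ (p - 1 - (a - p))} : Finset ℤ), ⟨⟨a - p, rfl⟩, ?_⟩, ?_⟩
  · rw [show p + (a - p) = a by ring]
    exact Finset.mem_insert_self _ _
  · rintro B ⟨⟨s, rfl⟩, hmem⟩
    simp only [Finset.mem_insert, Finset.mem_singleton] at hmem
    rcases hmem with h | h
    · obtain ⟨k, hk⟩ := ff_inj hm h
      exact pair_congr hm ⟨-k, by linear_combination -hk⟩ ⟨k, by linear_combination hk⟩
    · obtain ⟨k, hk⟩ := ff_inj hm h
      rw [Finset.pair_comm]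
      exact pair_congr hm ⟨-k, by linear_combination -hk⟩ ⟨k, by linear_combination hk⟩

lemma theta_congr (hm : 1 ≤ m₁) {p q : ℤ} (h : (2 * (m₁ : ℤ)) ∣ (p - q)) :
    Theta m₁ p = Theta m₁ q := by
  obtain ⟨k, hk⟩ := h
  ext B
  constructor
  · rintro ⟨s, rfl⟩
    exact ⟨s + (p - q), pair_congr hm ⟨0, by ring⟩ ⟨k, by linear_combination 2 * hk⟩⟩
  · rintro ⟨s, rfl⟩
    exact ⟨s + (q - p), pair_congr hm ⟨0, by ring⟩ ⟨-k, by linear_combination -2 * hk⟩⟩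

lemma theta_inj (hm : 1 ≤ m₁) {p q : ℤ} (h : Theta m₁ p = Theta m₁ q) :
    (2 * (m₁ : ℤ)) ∣ (p - q) := by
  have hm' : (1 : ℤ) ≤ (m₁ : ℤ) := by exact_mod_cast hm
  have hp0 : ({ff m₁ p, ff m₁ (p - 1)} : Finset ℤ) ∈ Theta m₁ p :=
    ⟨0, by rw [add_zero, sub_zero]⟩
  rw [h] at hp0
  obtain ⟨s, hs⟩ := hp0
  have h1 : ff m₁ p ∈ ({ff m₁ (q + s), ff m₁ (q - 1 - s)} : Finset ℤ) := by
    rw [← hs]; exact Finset.mem_insert_self _ _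
  have h2 : ff m₁ (p - 1) ∈ ({ff m₁ (q + s), ff m₁ (q - 1 - s)} : Finset ℤ) := by
    rw [← hs]; simp
  simp only [Finset.mem_insert, Finset.mem_singleton] at h1 h2
  rcases h1 with h1 | h1 <;> rcases h2 with h2 | h2
  · obtain ⟨k1, hk1⟩ := ff_inj hm h1
    obtain ⟨k2, hk2⟩ := ff_inj hm h2
    have hd : (4 * (m₁ : ℤ)) ∣ 1 := ⟨k1 - k2, by linear_combination hk1 - hk2⟩
    have := Int.le_of_dvd one_pos hd
    omega
  · obtain ⟨k1, hk1⟩ := ff_inj hm h1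
    obtain ⟨k2, hk2⟩ := ff_inj hm h2
    exact ⟨k1 + k2, by linarith⟩
  · obtain ⟨k1, hk1⟩ := ff_inj hm h1
    obtain ⟨k2, hk2⟩ := ff_inj hm h2
    exact ⟨k1 + k2, by linarith⟩
  · obtain ⟨k1, hk1⟩ := ff_inj hm h1
    obtain ⟨k2, hk2⟩ := ff_inj hm h2
    have hd : (4 * (m₁ : ℤ)) ∣ 1 := ⟨k1 - k2, by linear_combination hk1 - hk2⟩
    have := Int.le_of_dvd one_pos hd
    omega


lemma neg_eq_ff (hm : 1 ≤ m₁) {l : ℤ} (h1 : 1 ≤ l) (h2 : l ≤ 2 * (m₁ : ℤ)) :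
    -l = ff m₁ (2 * l - 2) := by
  have hm' : (1 : ℤ) ≤ (m₁ : ℤ) := by exact_mod_cast hm
  unfold ff
  rw [show (2 * l - 2) % (4 * (m₁ : ℤ)) = 2 * l - 2 from
    Int.emod_eq_of_lt (by omega) (by omega)]
  split_ifs with h <;> omega

lemma thetafun_eq (hm : 1 ≤ m₁) (hσ : IsCycleSigma m₁ m₂ σ)
    (θfun : ℤ → Set (Finset ℤ))
    (hθ : ∀ l : ℤ, θfun l =
      {B | ∃ t : ℕ, B = ({(σ ^ (t : ℤ)) (-l), (σ ^ (-(t : ℤ) - 1)) (-l)} : Finset ℤ)})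
    {l : ℤ} (h1 : 1 ≤ l) (h2 : l ≤ 2 * (m₁ : ℤ)) :
    θfun l = Theta m₁ (2 * l - 2) := by
  have hm' : (1 : ℤ) ≤ (m₁ : ℤ) := by exact_mod_cast hm
  have hn0 : (0 : ℤ) < 4 * (m₁ : ℤ) := by omega
  have hneg := neg_eq_ff hm h1 h2
  rw [hθ]
  ext B
  simp only [Set.mem_setOf_eq, Theta, hneg, sigma_zpow hm hσ]
  constructor
  · rintro ⟨t, rfl⟩
    exact ⟨(t : ℤ), pair_congr hm ⟨0, by ring⟩ ⟨0, by ring⟩⟩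
  · rintro ⟨t, rfl⟩
    refine ⟨(t % (4 * (m₁ : ℤ))).toNat, ?_⟩
    rw [Int.toNat_of_nonneg (Int.emod_nonneg t (ne_of_gt hn0))]
    refine (pair_congr hm ⟨-(t / (4 * (m₁ : ℤ))), ?_⟩ ⟨t / (4 * (m₁ : ℤ)), ?_⟩).symm <;>
      · rw [Int.emod_def]; ring

end Stmt7Aux

/-- For each `l₁ ∈ [2m₁]`, `θ(l₁) = { {σ^t(−l₁), σ^{−t−1}(−l₁)} : t ≥ 0 }` is a pairing of
`[±2m₁]` with `θ(l₁) = θ(l₁ + m₁)` (indices mod `2m₁`), the pairings `θ(1), …, θ(m₁)` are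
pairwise distinct, and there are exactly `m₁` distinct such pairings. -/


theorem stmt7 (m₁ m₂ : ℕ) (hm₁ : 1 ≤ m₁) (hm₂ : 1 ≤ m₂)
    (σ : Equiv.Perm ℤ) (hσ : IsCycleSigma m₁ m₂ σ)
    (θfun : ℤ → Set (Finset ℤ))
    (hθ : ∀ l : ℤ, θfun l =
      {B | ∃ t : ℕ, B = ({(σ ^ (t : ℤ)) (-l), (σ ^ (-(t : ℤ) - 1)) (-l)} : Finset ℤ)}) :
    (∀ l : ℤ, 1 ≤ l → l ≤ 2 * (m₁ : ℤ) →
      ((∀ B ∈ θfun l, B.card = 2 ∧ (B : Set ℤ) ⊆ (pmSet m₁ : Set ℤ)) ∧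
       (∀ x ∈ pmSet m₁, ∃! B, B ∈ θfun l ∧ x ∈ B)) ∧
      θfun l = θfun (if l + (m₁ : ℤ) ≤ 2 * (m₁ : ℤ) then l + m₁ else l - m₁)) ∧
    Set.InjOn θfun (Set.Icc (1 : ℤ) (m₁ : ℤ)) ∧
    (θfun '' Set.Icc (1 : ℤ) (2 * (m₁ : ℤ))).ncard = m₁ := by
  have hm' : (1 : ℤ) ≤ (m₁ : ℤ) := by exact_mod_cast hm₁
  have hfe : ∀ l : ℤ, 1 ≤ l → l ≤ 2 * (m₁ : ℤ) → θfun l = Stmt7Aux.Theta m₁ (2 * l - 2) :=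
    fun l h1 h2 => Stmt7Aux.thetafun_eq hm₁ hσ θfun hθ h1 h2
  have hinj : Set.InjOn θfun (Set.Icc (1 : ℤ) (m₁ : ℤ)) := by
    intro l hl l' hl' hval
    simp only [Set.mem_Icc] at hl hl'
    rw [hfe l hl.1 (by omega), hfe l' hl'.1 (by omega)] at hval
    obtain ⟨k, hk⟩ := Stmt7Aux.theta_inj hm₁ hval
    rcases lt_trichotomy k 0 with hk0 | rfl | hk0
    · have hb : (m₁ : ℤ) * k ≤ -(m₁ : ℤ) := by nlinarith
      linarith [hl.1, hl.2, hl'.1, hl'.2]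
    · linarith [hk]
    · have hb : (m₁ : ℤ) ≤ (m₁ : ℤ) * k := by nlinarith
      linarith [hl.1, hl.2, hl'.1, hl'.2]
  refine ⟨?_, hinj, ?_⟩
  · intro l h1 h2
    rw [hfe l h1 h2]
    refine ⟨⟨fun B hB => Stmt7Aux.theta_card_subset hm₁ hB, Stmt7Aux.theta_pairing hm₁ _⟩, ?_⟩
    split_ifs with hcond
    · rw [hfe (l + m₁) (by omega) (by omega)]
      exact Stmt7Aux.theta_congr hm₁ ⟨-1, by ring⟩
    · rw [hfe (l - m₁) (by omega) (by omega)]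
      exact Stmt7Aux.theta_congr hm₁ ⟨1, by ring⟩
  · have himg : θfun '' Set.Icc (1 : ℤ) (2 * (m₁ : ℤ)) = θfun '' Set.Icc (1 : ℤ) (m₁ : ℤ) := by
      apply Set.Subset.antisymm
      · rintro _ ⟨l, hl, rfl⟩
        simp only [Set.mem_Icc] at hl
        by_cases hle : l ≤ (m₁ : ℤ)
        · exact ⟨l, Set.mem_Icc.mpr ⟨hl.1, hle⟩, rfl⟩
        · refine ⟨l - m₁, Set.mem_Icc.mpr ⟨by omega, by omega⟩, ?_⟩
          rw [hfe l hl.1 hl.2, hfe (l - m₁) (by omega) (by omega)]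
          exact Stmt7Aux.theta_congr hm₁ ⟨-1, by ring⟩
      · exact Set.image_mono (Set.Icc_subset_Icc le_rfl (by omega))
    rw [himg, Set.ncard_image_of_injOn hinj, ← Finset.coe_Icc, Set.ncard_coe_finset,
      Int.card_Icc]
    omega
end

section
/- Let m₁ ≥ 1 and σ be the cycle (−1,1,−2,2,...,−2m₁,2m₁) on [±2m₁]. Let π be an even partition of [±2m₁] with all blocks of the form {−k,k,−l,l} or {k,−l}, and suppose for integers k_α ≤ k_β in [2m₁] that σ^{t+1}(k_α) ∼_π σ^{−t}(k_α) and σ^{t+1}(k_β) ∼_π σ^{−t}(k_β) for all t ≥ 0. Then k_β = k_α or k_β = k_α + m₁. -/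
/-- `σ` is the single cycle `(−1,1,−2,2,…,−2m₁,2m₁)` on `[±2m₁]`, fixing all other points. -/
def IsCycleSigma1 (m₁ : ℕ) (σ : Equiv.Perm ℤ) : Prop :=
  (∀ k : ℤ, 1 ≤ k → k ≤ 2 * (m₁ : ℤ) → σ (-k) = k) ∧
  (∀ k : ℤ, 1 ≤ k → k < 2 * (m₁ : ℤ) → σ k = -(k + 1)) ∧
  σ (2 * (m₁ : ℤ)) = -1 ∧
  (∀ x : ℤ, (x = 0 ∨ 2 * (m₁ : ℤ) < |x|) → σ x = x)

/-- The element at position `p` (mod `4m`) along the cycle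
`(−1,1,−2,2,…,−2m,2m)`, with `−1` at position `0`. -/
def pe (m : ℕ) (p : ℤ) : ℤ :=
  if (p % (4 * (m : ℤ))) % 2 = 0 then -((p % (4 * (m : ℤ))) / 2) - 1
  else (p % (4 * (m : ℤ)) + 1) / 2

section lemmas

variable (m : ℕ) (hm : 1 ≤ m)

lemma pe_congr {p p' : ℤ} (h : p % (4 * (m : ℤ)) = p' % (4 * (m : ℤ))) :
    pe m p = pe m p' := by unfold pe; rw [h]

include hm

lemma hMpos : (0 : ℤ) < 4 * (m : ℤ) := by
  have : (1 : ℤ) ≤ (m : ℤ) := by exact_mod_cast hm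
  linarith

lemma pe_odd {k : ℤ} (h1 : 1 ≤ k) (h2 : k ≤ 2 * (m : ℤ)) : pe m (2 * k - 1) = k := by
  have hq : (2 * k - 1) % (4 * (m : ℤ)) = 2 * k - 1 :=
    Int.emod_eq_of_lt (by omega) (by omega)
  unfold pe; rw [hq]; rw [if_neg (by omega)]; omega

lemma pe_even {k : ℤ} (h1 : 1 ≤ k) (h2 : k ≤ 2 * (m : ℤ)) : pe m (2 * k - 2) = -k := by
  have hq : (2 * k - 2) % (4 * (m : ℤ)) = 2 * k - 2 :=
    Int.emod_eq_of_lt (by omega) (by omega)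
  unfold pe; rw [hq]; rw [if_pos (by omega)]; omega

lemma pe_inj {p p' : ℤ} (h : pe m p = pe m p') :
    p % (4 * (m : ℤ)) = p' % (4 * (m : ℤ)) := by
  have hM := hMpos m hm
  set q := p % (4 * (m : ℤ)) with hq
  set q' := p' % (4 * (m : ℤ)) with hq'
  have h0 : 0 ≤ q := Int.emod_nonneg _ (by omega)
  have h0' : 0 ≤ q' := Int.emod_nonneg _ (by omega)
  unfold pe at h
  rw [← hq, ← hq'] at h
  rcases Int.emod_two_eq q with he | he <;> rcases Int.emod_two_eq q' with he' | he'
  · rw [if_pos he, if_pos he'] at h; omega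
  · rw [if_pos he, if_neg (by omega)] at h; omega
  · rw [if_neg (by omega), if_pos he'] at h; omega
  · rw [if_neg (by omega), if_neg (by omega)] at h; omega

lemma pe_mod2 (p : ℤ) : (p % (4 * (m : ℤ))) % 2 = p % 2 :=
  Int.emod_emod_of_dvd p ⟨2 * (m : ℤ), by ring⟩

lemma pe_pos {p : ℤ} (h : p % 2 = 1) : 1 ≤ pe m p := by
  have hM := hMpos m hm
  have h2 := pe_mod2 m hm p
  have h0 : 0 ≤ p % (4 * (m : ℤ)) := Int.emod_nonneg _ (by omega)
  unfold pe; rw [if_neg (by omega)]; omega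

lemma pe_neg {p : ℤ} (h : p % 2 = 0) : pe m p ≤ -1 := by
  have hM := hMpos m hm
  have h2 := pe_mod2 m hm p
  have h0 : 0 ≤ p % (4 * (m : ℤ)) := Int.emod_nonneg _ (by omega)
  unfold pe; rw [if_pos (by omega)]; omega

lemma emod_succ (p : ℤ) :
    (p + 1) % (4 * (m : ℤ)) = (p % (4 * (m : ℤ)) + 1) % (4 * (m : ℤ)) := by
  conv_lhs => rw [show p + 1 = p % (4 * (m : ℤ)) + 1 + 4 * (m : ℤ) * (p / (4 * (m : ℤ))) by
    rw [Int.emod_def]; ring]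
  exact Int.add_mul_emod_self_left _ _ _

lemma pe_succ_of_even {p : ℤ} (h : p % 2 = 0) : pe m (p + 1) = -(pe m p) := by
  have hM := hMpos m hm
  have h2 := pe_mod2 m hm p
  set q := p % (4 * (m : ℤ)) with hq
  have h0 : 0 ≤ q := Int.emod_nonneg _ (by omega)
  have h1 : q < 4 * (m : ℤ) := Int.emod_lt_of_pos _ hM
  have hs : (p + 1) % (4 * (m : ℤ)) = q + 1 := by
    rw [emod_succ m hm p, ← hq]; exact Int.emod_eq_of_lt (by omega) (by omega)
  unfold pe
  rw [hs, ← hq, if_neg (show ¬((q + 1) % 2 = 0) by omega), if_pos (show q % 2 = 0 by omega)]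
  omega

lemma sigma_pe {σ : Equiv.Perm ℤ} (hσ : IsCycleSigma1 m σ) (p : ℤ) :
    σ (pe m p) = pe m (p + 1) := by
  obtain ⟨h1, h2, h3, _⟩ := hσ
  have hM := hMpos m hm
  set q := p % (4 * (m : ℤ)) with hq
  have h0 : 0 ≤ q := Int.emod_nonneg _ (by omega)
  have h1' : q < 4 * (m : ℤ) := Int.emod_lt_of_pos _ hM
  have hs : (p + 1) % (4 * (m : ℤ)) = (q + 1) % (4 * (m : ℤ)) := by
    rw [emod_succ m hm p, ← hq]
  rcases Int.emod_two_eq q with he | ho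
  · -- q even : pe m p = -(q/2+1), σ of it is q/2+1
    have hvp : pe m p = -(q / 2 + 1) := by unfold pe; rw [← hq, if_pos he]; ring
    have hs' : (p + 1) % (4 * (m : ℤ)) = q + 1 := by
      rw [hs]; exact Int.emod_eq_of_lt (by omega) (by omega)
    have hv1 : pe m (p + 1) = q / 2 + 1 := by
      unfold pe; rw [hs', if_neg (by omega)]; omega
    rw [hvp, hv1]
    exact h1 (q / 2 + 1) (by omega) (by omega)
  · rcases eq_or_lt_of_le (show q + 1 ≤ 4 * (m : ℤ) by omega) with heq | hlt
    · -- q = 4m - 1 : pe m p = 2m, σ (2m) = -1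
      have hvp : pe m p = 2 * (m : ℤ) := by
        unfold pe; rw [← hq, if_neg (by omega)]; omega
      have hs' : (p + 1) % (4 * (m : ℤ)) = 0 := by
        rw [hs, heq]; exact Int.emod_self
      have hv1 : pe m (p + 1) = -1 := by
        unfold pe; rw [hs', if_pos (by norm_num)]; norm_num
      rw [hvp, hv1]; exact h3
    · -- q odd, q + 1 < 4m : pe m p = (q+1)/2 < 2m
      have hvp : pe m p = (q + 1) / 2 := by unfold pe; rw [← hq, if_neg (by omega)]
      have hs' : (p + 1) % (4 * (m : ℤ)) = q + 1 := by
        rw [hs]; exact Int.emod_eq_of_lt (by omega) (by omega)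
      have hv1 : pe m (p + 1) = -((q + 1) / 2 + 1) := by
        unfold pe; rw [hs', if_pos (by omega)]; omega
      rw [hvp, hv1]
      exact h2 ((q + 1) / 2) (by omega) (by omega)

lemma sigma_zpow_pe {σ : Equiv.Perm ℤ} (hσ : IsCycleSigma1 m σ) :
    ∀ (z : ℤ) (p : ℤ), (σ ^ z) (pe m p) = pe m (p + z) := by
  intro z
  induction z using Int.induction_on with
  | zero => intro p; simp
  | succ n ih =>
      intro p
      rw [show ((n : ℤ) + 1) = (n : ℤ) + 1 from rfl, zpow_add_one, Equiv.Perm.mul_apply,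
        sigma_pe m hm hσ p, ih (p + 1)]
      ring_nf
  | pred n ih =>
      intro p
      have hinv : σ⁻¹ (pe m p) = pe m (p - 1) := by
        have h := sigma_pe m hm hσ (p - 1)
        rw [sub_add_cancel] at h
        rw [← h]; simp
      rw [show (-(n : ℤ) - 1) = (-(n : ℤ)) - 1 from rfl, zpow_sub_one, Equiv.Perm.mul_apply,
        hinv, ih (p - 1)]
      ring_nf

end lemmas

/-- If `π` is an even partition of `[±2m₁]` with all blocks of the form `{−k,k,−l,l}` or
`{k,−l}`, and `k_α ≤ k_β` in `[2m₁]` both satisfy `σ^{t+1}(k) ∼_π σ^{−t}(k)` for all `t ≥ 0`,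
then `k_β = k_α` or `k_β = k_α + m₁`. -/
theorem stmt11 (m₁ : ℕ) (hm₁ : 1 ≤ m₁)
    (σ : Equiv.Perm ℤ) (hσ : IsCycleSigma1 m₁ σ)
    (π : Finpartition (pmSet m₁))
    (heven : ∀ B ∈ π.parts, Even B.card)
    (hforms : ∀ B ∈ π.parts,
      (∃ k l : ℤ, 1 ≤ k ∧ k ≤ 2 * (m₁ : ℤ) ∧ 1 ≤ l ∧ l ≤ 2 * (m₁ : ℤ) ∧
        B = ({-k, k, -l, l} : Finset ℤ)) ∨
      (∃ k l : ℤ, 1 ≤ k ∧ k ≤ 2 * (m₁ : ℤ) ∧ 1 ≤ l ∧ l ≤ 2 * (m₁ : ℤ) ∧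
        B = ({k, -l} : Finset ℤ)))
    (kα kβ : ℤ) (hle : kα ≤ kβ)
    (hkα : 1 ≤ kα ∧ kα ≤ 2 * (m₁ : ℤ)) (hkβ : 1 ≤ kβ ∧ kβ ≤ 2 * (m₁ : ℤ))
    (hrelα : ∀ t : ℕ, ∃ B ∈ π.parts,
      (σ ^ ((t : ℤ) + 1)) kα ∈ B ∧ (σ ^ (-(t : ℤ))) kα ∈ B)
    (hrelβ : ∀ t : ℕ, ∃ B ∈ π.parts,
      (σ ^ ((t : ℤ) + 1)) kβ ∈ B ∧ (σ ^ (-(t : ℤ))) kβ ∈ B) :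
    kβ = kα ∨ kβ = kα + m₁ := by
  obtain ⟨hkα1, hkα2⟩ := hkα
  obtain ⟨hkβ1, hkβ2⟩ := hkβ
  have hm' : (1 : ℤ) ≤ (m₁ : ℤ) := by exact_mod_cast hm₁
  set a : ℤ := 2 * kα - 1 with ha
  set b : ℤ := 2 * kβ - 1 with hb
  have hea : pe m₁ a = kα := pe_odd m₁ hm₁ hkα1 hkα2
  have heb : pe m₁ b = kβ := pe_odd m₁ hm₁ hkβ1 hkβ2
  -- shift lemmas for emod
  have key_shift : ∀ c x : ℤ, (c + x % (4 * (m₁ : ℤ))) % (4 * (m₁ : ℤ))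
      = (c + x) % (4 * (m₁ : ℤ)) := by
    intro c x
    rw [Int.add_emod c (x % _), Int.emod_emod_of_dvd _ dvd_rfl, ← Int.add_emod]
  have key_shift_sub : ∀ c x : ℤ, (c - x % (4 * (m₁ : ℤ))) % (4 * (m₁ : ℤ))
      = (c - x) % (4 * (m₁ : ℤ)) := by
    intro c x
    rw [Int.sub_emod c (x % _), Int.emod_emod_of_dvd _ dvd_rfl, ← Int.sub_emod]
  -- divisibility from equality of positions
  have hdvd : ∀ x y : ℤ, pe m₁ x = pe m₁ y → (4 * (m₁ : ℤ)) ∣ (x - y) := by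
    intro x y h
    have hxy := pe_inj m₁ hm₁ h
    have h0 : (x - y) % (4 * (m₁ : ℤ)) = 0 := by
      rw [Int.sub_emod, hxy, sub_self, Int.zero_emod]
    exact Int.dvd_of_emod_eq_zero h0
  -- final step from divisibility
  have hfin : (4 * (m₁ : ℤ)) ∣ 4 * (kβ - kα) → kβ = kα ∨ kβ = kα + m₁ := by
    rintro ⟨t, ht⟩
    have hmt : kβ - kα = (m₁ : ℤ) * t := by linarith [ht]
    have h0 : 0 ≤ t := by
      by_contra hc; push_neg at hc; nlinarith
    have h1 : t ≤ 1 := by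
      by_contra hc; push_neg at hc; nlinarith
    interval_cases t
    · left; omega
    · right; omega
  -- reflection relation around kα
  have hα : ∀ p : ℤ, ∃ B ∈ π.parts, pe m₁ p ∈ B ∧ pe m₁ (2 * a + 1 - p) ∈ B := by
    intro p
    set t : ℕ := ((p - a - 1) % (4 * (m₁ : ℤ))).toNat with htdef
    have htz : (t : ℤ) = (p - a - 1) % (4 * (m₁ : ℤ)) :=
      Int.toNat_of_nonneg (Int.emod_nonneg _ (by positivity))
    obtain ⟨B, hB, h1, h2⟩ := hrelα t
    rw [← hea, sigma_zpow_pe m₁ hm₁ hσ] at h1 h2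
    refine ⟨B, hB, ?_, ?_⟩
    · have he : pe m₁ p = pe m₁ (a + ((t : ℤ) + 1)) := by
        apply pe_congr; symm
        rw [htz, show a + ((p - a - 1) % (4 * (m₁ : ℤ)) + 1)
          = (a + 1) + (p - a - 1) % (4 * (m₁ : ℤ)) by ring, key_shift,
          show a + 1 + (p - a - 1) = p by ring]
      rw [he]; exact h1
    · have he : pe m₁ (2 * a + 1 - p) = pe m₁ (a + (-(t : ℤ))) := by
        apply pe_congr; symm
        rw [htz, show a + (-((p - a - 1) % (4 * (m₁ : ℤ))))
          = a - (p - a - 1) % (4 * (m₁ : ℤ)) by ring, key_shift_sub,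
          show a - (p - a - 1) = 2 * a + 1 - p by ring]
      rw [he]; exact h2
  have hβ : ∀ p : ℤ, ∃ B ∈ π.parts, pe m₁ p ∈ B ∧ pe m₁ (2 * b + 1 - p) ∈ B := by
    intro p
    set t : ℕ := ((p - b - 1) % (4 * (m₁ : ℤ))).toNat with htdef
    have htz : (t : ℤ) = (p - b - 1) % (4 * (m₁ : ℤ)) :=
      Int.toNat_of_nonneg (Int.emod_nonneg _ (by positivity))
    obtain ⟨B, hB, h1, h2⟩ := hrelβ t
    rw [← heb, sigma_zpow_pe m₁ hm₁ hσ] at h1 h2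
    refine ⟨B, hB, ?_, ?_⟩
    · have he : pe m₁ p = pe m₁ (b + ((t : ℤ) + 1)) := by
        apply pe_congr; symm
        rw [htz, show b + ((p - b - 1) % (4 * (m₁ : ℤ)) + 1)
          = (b + 1) + (p - b - 1) % (4 * (m₁ : ℤ)) by ring, key_shift,
          show b + 1 + (p - b - 1) = p by ring]
      rw [he]; exact h1
    · have he : pe m₁ (2 * b + 1 - p) = pe m₁ (b + (-(t : ℤ))) := by
        apply pe_congr; symm
        rw [htz, show b + (-((p - b - 1) % (4 * (m₁ : ℤ))))
          = b - (p - b - 1) % (4 * (m₁ : ℤ)) by ring, key_shift_sub,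
          show b - (p - b - 1) = 2 * b + 1 - p by ring]
      rw [he]; exact h2
  -- the block containing kα
  obtain ⟨B, hB, haB, ha1B⟩ := hα a
  have ha1B' : pe m₁ (a + 1) ∈ B := by
    rw [show a + 1 = 2 * a + 1 - a by ring]; exact ha1B
  -- rotation relation at a
  have hadB : pe m₁ (a + 4 * (kβ - kα)) ∈ B := by
    obtain ⟨B1, hB1, h1, h2⟩ := hα a
    obtain ⟨B2, hB2, h3, h4⟩ := hβ (2 * a + 1 - a)
    have e12 : B1 = B2 := π.eq_of_mem_parts hB1 hB2 h2 h3
    have e1B : B1 = B := π.eq_of_mem_parts hB1 hB h1 haB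
    have harg : 2 * b + 1 - (2 * a + 1 - a) = a + 4 * (kβ - kα) := by
      rw [ha, hb]; ring
    rw [harg] at h4
    rw [← e1B, e12]; exact h4
  -- parity and sign facts
  have hneg1 : pe m₁ (a + 1) ≤ -1 := pe_neg m₁ hm₁ (by omega)
  have hposd : 1 ≤ pe m₁ (a + 4 * (kβ - kα)) := pe_pos m₁ hm₁ (by omega)
  have hpe2 : pe m₁ (a + 2) = -(pe m₁ (a + 1)) := by
    have h := pe_succ_of_even m₁ hm₁ (p := a + 1) (by omega)
    rw [show a + 1 + 1 = a + 2 by ring] at h; exact h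
  have hne : pe m₁ (a + 1) ≠ -kα := by
    intro h
    have h' : pe m₁ (a + 1) = pe m₁ (a - 1) := by
      rw [h, ← pe_even m₁ hm₁ hkα1 hkα2]
      congr 1; omega
    have hd := hdvd _ _ h'
    rw [show (a + 1) - (a - 1) = 2 by ring] at hd
    have := Int.le_of_dvd (by norm_num) hd
    omega
  -- main case analysis on the block containing kα
  rcases hforms B hB with ⟨k, l, hk1, hk2, hl1, hl2, hBeq⟩ | ⟨k, l, hk1, hk2, hl1, hl2, hBeq⟩
  · -- 4-block
    subst hBeq
    rw [hea] at haB
    simp only [Finset.mem_insert, Finset.mem_singleton] at haB ha1B' hadB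
    have key : ∀ u v : ℤ, 1 ≤ u → 1 ≤ v → kα = u →
        (pe m₁ (a + 1) = -u ∨ pe m₁ (a + 1) = -v) →
        (pe m₁ (a + 4 * (kβ - kα)) = u ∨ pe m₁ (a + 4 * (kβ - kα)) = v) →
        kβ = kα ∨ kβ = kα + m₁ := by
      intro u v hu hv hku hor1 hor2
      have hlv : pe m₁ (a + 1) = -v := by
        rcases hor1 with h | h
        · exfalso; rw [← hku] at h; exact hne h
        · exact h
      have hveq : v = pe m₁ (a + 2) := by rw [hpe2, hlv]; ring
      rcases hor2 with h | h
      · apply hfin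
        have heq : pe m₁ (a + 4 * (kβ - kα)) = pe m₁ a := by rw [h, ← hku, ← hea]
        have hd := hdvd _ _ heq
        rw [show (a + 4 * (kβ - kα)) - a = 4 * (kβ - kα) by ring] at hd
        exact hd
      · exfalso
        have heq : pe m₁ (a + 4 * (kβ - kα)) = pe m₁ (a + 2) := by rw [h, hveq]
        obtain ⟨t, ht⟩ := hdvd _ _ heq
        have h4 : (4 : ℤ) ∣ 2 := ⟨kβ - kα - (m₁ : ℤ) * t, by linear_combination -ht⟩
        norm_num at h4
    have hor1 : pe m₁ (a + 1) = -k ∨ pe m₁ (a + 1) = -l := by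
      rcases ha1B' with h | h | h | h
      · left; exact h
      · exfalso; omega
      · right; exact h
      · exfalso; omega
    have hor2 : pe m₁ (a + 4 * (kβ - kα)) = k ∨ pe m₁ (a + 4 * (kβ - kα)) = l := by
      rcases hadB with h | h | h | h
      · exfalso; omega
      · left; exact h
      · exfalso; omega
      · right; exact h
    rcases haB with h | h | h | h
    · exfalso; omega
    · exact key k l hk1 hl1 h hor1 hor2
    · exfalso; omega
    · exact key l k hl1 hk1 h hor1.symm hor2.symm
  · -- 2-block
    subst hBeq
    rw [hea] at haB
    simp only [Finset.mem_insert, Finset.mem_singleton] at haB hadB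
    have hk : kα = k := by
      rcases haB with h | h
      · exact h
      · exfalso; omega
    have hvk : pe m₁ (a + 4 * (kβ - kα)) = k := by
      rcases hadB with h | h
      · exact h
      · exfalso; omega
    apply hfin
    have heq : pe m₁ (a + 4 * (kβ - kα)) = pe m₁ a := by rw [hvk, ← hk, ← hea]
    have hd := hdvd _ _ heq
    rw [show (a + 4 * (kβ - kα)) - a = 4 * (kβ - kα) by ring] at hd
    exact hd
end

section
/- Let m ≥ 1, let π be an even partition of [±2m], and let π_odd denote the restriction of π to the odd elements of [±2m]. If π_odd is an even partition and every block of π has the form {k, −l} or {−k, k, −l, l} with k, l positive, then π has no block of size two of the form {k, l} or {−k, −l} with k+l odd; consequently every block of π of size four is of the form {k, l, −k, −l}, i.e. the undirected graph G_π has only double-loops as connected components. -/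
open scoped Classical

/-- Let `π` be an even partition of `[±2m]` whose restriction `π_odd` to the odd elements is
even and all of whose blocks have the form `{k,−l}` or `{−k,k,−l,l}` with `k, l` positive.
Then `π` has no two-element block whose two elements have different parities (no block
`{k,l}` or `{−k,−l}` with `k+l` odd), and every four-element block of `π` has the form
`{k, l, −k, −l}`; i.e. `G_π` has only double-loops as components. -/
theorem stmt13 (m : ℕ) (hm : 1 ≤ m) (π : Finpartition (pmSet m))
    (heven : ∀ B ∈ π.parts, Even B.card)
    (hodd : ∀ B ∈ π.parts, Even ((B.filter (fun x => Odd x)).card))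
    (hforms : ∀ B ∈ π.parts,
      (∃ k l : ℤ, 1 ≤ k ∧ k ≤ 2 * (m : ℤ) ∧ 1 ≤ l ∧ l ≤ 2 * (m : ℤ) ∧
        B = ({k, -l} : Finset ℤ)) ∨
      (∃ k l : ℤ, 1 ≤ k ∧ k ≤ 2 * (m : ℤ) ∧ 1 ≤ l ∧ l ≤ 2 * (m : ℤ) ∧
        B = ({-k, k, -l, l} : Finset ℤ))) :
    (∀ B ∈ π.parts, B.card = 2 → ∀ a ∈ B, ∀ b ∈ B, (Odd a ↔ Odd b)) ∧
    (∀ k l : ℤ, 1 ≤ k → 1 ≤ l → Odd (k + l) →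
      ({k, l} : Finset ℤ) ∉ π.parts ∧ ({-k, -l} : Finset ℤ) ∉ π.parts) ∧
    (∀ B ∈ π.parts, B.card = 4 →
      ∃ k l : ℤ, 1 ≤ k ∧ k ≤ 2 * (m : ℤ) ∧ 1 ≤ l ∧ l ≤ 2 * (m : ℤ) ∧
        B = ({k, l, -k, -l} : Finset ℤ)) := by

  refine ⟨?_, ?_, ?_⟩
  · intro B hB hcard a ha b hb
    by_contra h
    have hab : a ≠ b := by rintro rfl; exact h Iff.rfl
    have hBab : B = {a, b} := by
      refine (Finset.eq_of_subset_of_card_le ?_ ?_).symm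
      · exact Finset.insert_subset ha (Finset.singleton_subset_iff.2 hb)
      · rw [hcard, Finset.card_insert_of_notMem (by simp [hab]), Finset.card_singleton]
    have he := hodd B hB
    rw [hBab] at he
    have key : (Odd a ∧ ¬ Odd b) ∨ (¬ Odd a ∧ Odd b) := by tauto
    rcases key with ⟨ha', hb'⟩ | ⟨ha', hb'⟩ <;>
      simp [Finset.filter_insert, Finset.filter_singleton, ha', hb', Nat.even_iff] at he
  · intro k l hk hl hkl
    constructor <;> intro hmem
    · rcases hforms _ hmem with ⟨k', l', hk', _, hl', _, hB⟩ | ⟨k', l', hk', _, hl', _, hB⟩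
      · have : (-l' : ℤ) ∈ ({k, l} : Finset ℤ) := hB ▸ (by simp)
        simp only [Finset.mem_insert, Finset.mem_singleton] at this
        omega
      · have : (-k' : ℤ) ∈ ({k, l} : Finset ℤ) := hB ▸ (by simp)
        simp only [Finset.mem_insert, Finset.mem_singleton] at this
        omega
    · rcases hforms _ hmem with ⟨k', l', hk', _, hl', _, hB⟩ | ⟨k', l', hk', _, hl', _, hB⟩
      · have : (k' : ℤ) ∈ ({-k, -l} : Finset ℤ) := hB ▸ (by simp)
        simp only [Finset.mem_insert, Finset.mem_singleton] at this
        omega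
      · have : (k' : ℤ) ∈ ({-k, -l} : Finset ℤ) := hB ▸ (by simp)
        simp only [Finset.mem_insert, Finset.mem_singleton] at this
        omega
  · intro B hB hcard
    rcases hforms _ hB with ⟨k', l', hk', hk2, hl', hl2, hB'⟩ | ⟨k', l', hk', hk2, hl', hl2, hB'⟩
    · exfalso
      rw [hB'] at hcard
      have h1 : ({k', -l'} : Finset ℤ).card ≤ 2 := by
        calc ({k', -l'} : Finset ℤ).card ≤ ({-l'} : Finset ℤ).card + 1 :=
              Finset.card_insert_le _ _
        _ = 2 := by simp
      omega
    · exact ⟨k', l', hk', hk2, hl', hl2, by rw [hB']; ext x; simp; tauto⟩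
end

section
/- Let W be an N×N uniformly random signed permutation matrix (W = DP with P a uniform permutation matrix and D an independent diagonal matrix with i.i.d. uniform ±1 entries). Fix functions i, j : F → [N] on a finite index set F and consider E[∏_{f ∈ F} W(i_f, j_f)]. If ker(i) ≠ ker(j), this expectation is 0; if ker(i) = ker(j) = π and π is an even partition, the expectation equals (N − #(π))!/N!. -/
open scoped Classical

lemma count_ext {N : ℕ} (s : Finset (Fin N)) (φ : Fin N → Fin N)
    (hφ : Set.InjOn φ s) :
    Fintype.card {σ : Equiv.Perm (Fin N) // ∀ a ∈ s, σ a = φ a}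
      = (N - s.card).factorial := by
  classical
  set t : Finset (Fin N) := s.image φ with ht
  have hts : t.card = s.card := Finset.card_image_of_injOn hφ
  have hbij : Function.Bijective (fun a : {a : Fin N // a ∈ s} =>
      (⟨φ a.1, Finset.mem_image_of_mem φ a.2⟩ : {a : Fin N // a ∈ t})) := by
    rw [Fintype.bijective_iff_injective_and_card]
    constructor
    · intro a b hab
      exact Subtype.ext (hφ a.2 b.2 (by simpa using hab))
    · simp [Fintype.card_coe, hts]
  let e1 : {a : Fin N // a ∈ s} ≃ {a : Fin N // a ∈ t} := Equiv.ofBijective _ hbij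
  have e2 : {a : Fin N // ¬ a ∈ s} ≃ {a : Fin N // ¬ a ∈ t} := by
    apply Fintype.equivOfCardEq
    rw [Fintype.card_subtype_compl (p := fun a : Fin N => a ∈ s),
      Fintype.card_subtype_compl (p := fun a : Fin N => a ∈ t)]
    simp [Fintype.card_coe, hts]
  let σ₀ : Equiv.Perm (Fin N) :=
    ((Equiv.sumCompl (· ∈ s)).symm.trans (e1.sumCongr e2)).trans (Equiv.sumCompl (· ∈ t))
  have hσ₀ : ∀ a ∈ s, σ₀ a = φ a := by
    intro a ha
    simp [σ₀, e1, Equiv.ofBijective, Equiv.sumCompl_symm_apply_of_pos (p := (· ∈ s)) ha]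
  let E1 : {σ : Equiv.Perm (Fin N) // ∀ a ∈ s, σ a = φ a} ≃
      {σ : Equiv.Perm (Fin N) // ∀ a ∈ s, σ a = a} :=
  { toFun := fun σ => ⟨σ₀⁻¹ * σ.1, fun a ha => by
      simp [Equiv.Perm.mul_apply, σ.2 a ha, ← hσ₀ a ha]⟩
    invFun := fun σ => ⟨σ₀ * σ.1, fun a ha => by
      simp [Equiv.Perm.mul_apply, σ.2 a ha, hσ₀ a ha]⟩
    left_inv := fun σ => by
      ext : 2
      simp
    right_inv := fun σ => by
      ext : 2
      simp }
  have E2 : {σ : Equiv.Perm (Fin N) // ∀ a ∈ s, σ a = a} ≃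
      Equiv.Perm {a : Fin N // ¬ a ∈ s} :=
    (Equiv.subtypeEquivRight (fun σ => by
      constructor
      · intro H a ha
        exact H a (not_not.mp ha)
      · intro H a ha
        exact H a (not_not.mpr ha))).trans
      (Equiv.Perm.subtypeEquivSubtypePerm (fun a => ¬ a ∈ s)).symm
  rw [Fintype.card_congr (E1.trans E2), Fintype.card_perm,
    Fintype.card_subtype_compl (p := fun a : Fin N => a ∈ s)]
  simp [Fintype.card_coe]

/-- Expectation of a product of entries of a uniformly random `N×N` signed permutation
matrix `W = D·P` (with `P` a uniform permutation matrix and `D` an independent diagonal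
matrix of i.i.d. uniform signs), computed as an average over the canonical finite sample
space `Equiv.Perm (Fin N) × (Fin N → Bool)`. If `ker(i) ≠ ker(j)` the expectation is `0`;
if `ker(i) = ker(j)` is an even partition it equals `(N − #π)!/N!`. -/
theorem stmt14 (N : ℕ) {F : Type*} [Fintype F] [DecidableEq F] (i j : F → Fin N) :
    (¬ (∀ f g : F, i f = i g ↔ j f = j g) →
      (∑ τ : Equiv.Perm (Fin N), ∑ e : Fin N → Bool, ∏ f : F,
          ((if τ (i f) = j f then (1 : ℝ) else 0) * (if e (i f) then 1 else -1))) /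
        ((Nat.factorial N * 2 ^ N : ℕ) : ℝ) = 0) ∧
    ((∀ f g : F, i f = i g ↔ j f = j g) →
      (∀ f : F, Even ((Finset.univ.filter (fun g : F => i g = i f)).card)) →
      (∑ τ : Equiv.Perm (Fin N), ∑ e : Fin N → Bool, ∏ f : F,
          ((if τ (i f) = j f then (1 : ℝ) else 0) * (if e (i f) then 1 else -1))) /
        ((Nat.factorial N * 2 ^ N : ℕ) : ℝ) =
      (Nat.factorial (N - (Finset.univ.image i).card) : ℝ) / (Nat.factorial N : ℝ)) := by
  constructor
  · intro h
    have hz : (∑ τ : Equiv.Perm (Fin N), ∑ e : Fin N → Bool, ∏ f : F,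
        ((if τ (i f) = j f then (1 : ℝ) else 0) * (if e (i f) then 1 else -1))) = 0 := by
      apply Finset.sum_eq_zero
      intro τ _
      apply Finset.sum_eq_zero
      intro e _
      have hne : ¬ ∀ f, τ (i f) = j f := by
        intro H
        apply h
        intro f g
        constructor
        · intro hfg; rw [← H f, ← H g, hfg]
        · intro hfg; apply τ.injective; rw [H f, H g, hfg]
      push_neg at hne
      obtain ⟨f₀, hf₀⟩ := hne
      apply Finset.prod_eq_zero (Finset.mem_univ f₀)
      simp [hf₀]
    rw [hz, zero_div]
  · intro hker heven
    set s : Finset (Fin N) := Finset.univ.image i with hs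
    -- the sign part is identically 1
    have hsign : ∀ e : Fin N → Bool, ∏ f : F, (if e (i f) then (1:ℝ) else -1) = 1 := by
      intro e
      rw [Finset.prod_comp (fun a => if e a then (1:ℝ) else -1) i]
      apply Finset.prod_eq_one
      intro b hb
      obtain ⟨f, -, rfl⟩ := Finset.mem_image.mp hb
      by_cases he : e (i f)
      · simp [he]
      · simp only [he, if_false]
        exact (heven f).neg_one_pow
    -- the partial map determined by i,j
    set φ : Fin N → Fin N := fun a => if h : ∃ f, i f = a then j h.choose else a with hφ
    have hφi : ∀ f : F, φ (i f) = j f := by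
      intro f
      have hex : ∃ g, i g = i f := ⟨f, rfl⟩
      simp only [hφ, dif_pos hex]
      exact (hker _ _).mp hex.choose_spec
    have hinj : Set.InjOn φ s := by
      intro a ha b hb hab
      obtain ⟨f, -, rfl⟩ := Finset.mem_image.mp ha
      obtain ⟨g, -, rfl⟩ := Finset.mem_image.mp hb
      rw [hφi, hφi] at hab
      exact (hker f g).mpr hab
    have hiff : ∀ τ : Equiv.Perm (Fin N),
        (∀ f : F, τ (i f) = j f) ↔ ∀ a ∈ s, τ a = φ a := by
      intro τ
      constructor
      · intro H a ha
        obtain ⟨f, -, rfl⟩ := Finset.mem_image.mp ha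
        rw [hφi]; exact H f
      · intro H f
        have := H (i f) (Finset.mem_image_of_mem i (Finset.mem_univ f))
        rwa [hφi] at this
    have hnum : (∑ τ : Equiv.Perm (Fin N), ∑ e : Fin N → Bool, ∏ f : F,
        ((if τ (i f) = j f then (1 : ℝ) else 0) * (if e (i f) then 1 else -1))) =
        ((N - s.card).factorial : ℝ) * 2 ^ N := by
      calc (∑ τ : Equiv.Perm (Fin N), ∑ e : Fin N → Bool, ∏ f : F,
          ((if τ (i f) = j f then (1 : ℝ) else 0) * (if e (i f) then 1 else -1)))
          = ∑ τ : Equiv.Perm (Fin N), ∑ e : Fin N → Bool,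
            (∏ f : F, if τ (i f) = j f then (1:ℝ) else 0) *
            (∏ f : F, if e (i f) then (1:ℝ) else -1) := by
            simp only [Finset.prod_mul_distrib]
        _ = ∑ τ : Equiv.Perm (Fin N),
            (∏ f : F, if τ (i f) = j f then (1:ℝ) else 0) * 2 ^ N := by
            refine Finset.sum_congr rfl fun τ _ => ?_
            rw [← Finset.mul_sum]
            congr 1
            rw [Finset.sum_congr rfl fun e _ => hsign e]
            simp [Finset.card_univ]
        _ = (∑ τ : Equiv.Perm (Fin N),
            ∏ f : F, if τ (i f) = j f then (1:ℝ) else 0) * 2 ^ N := by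
            rw [Finset.sum_mul]
        _ = ((Fintype.card {σ : Equiv.Perm (Fin N) // ∀ a ∈ s, σ a = φ a} : ℕ) : ℝ)
              * 2 ^ N := by
            congr 1
            have h1 : ∀ τ : Equiv.Perm (Fin N),
                (∏ f : F, if τ (i f) = j f then (1:ℝ) else 0) =
                if (∀ a ∈ s, τ a = φ a) then 1 else 0 := by
              intro τ
              rw [Finset.prod_boole]
              by_cases hτ : ∀ a ∈ s, τ a = φ a
              · rw [if_pos hτ, if_pos (fun f _ => ((hiff τ).mpr hτ) f)]
              · rw [if_neg hτ, if_neg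
                  (fun H => hτ ((hiff τ).mp (fun f => H f (Finset.mem_univ f))))]
            rw [Finset.sum_congr rfl fun τ _ => h1 τ, Finset.sum_boole]
            norm_cast
            convert (Fintype.card_subtype _).symm using 2
        _ = ((N - s.card).factorial : ℝ) * 2 ^ N := by
            rw [count_ext s φ hinj]
    rw [hnum]
    have h2 : (2:ℝ) ^ N ≠ 0 := by positivity
    push_cast
    rw [mul_div_mul_right _ _ h2]
end
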